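/- A composite integer n is a k-strong Giuga number (i.e., ∑_{j=1}^{n-1} j^{k(n-1)} ≡ -1 (mod n)) if and only if n is both a Giuga number and λ(n) divides k(n-1). -/

import Mathlib

open Finset

/-- The Carmichael function: exponent of the unit group of `ZMod n`. -/
noncomputable def carmichael (n : ℕ) : ℕ := Monoid.exponent (ZMod n)ˣ

/-- `n` is composite. -/
def Composite (n : ℕ) : Prop := 2 ≤ n ∧ ¬ n.Prime

/-- `n` is a Giuga number. -/
def IsGiuga (n : ℕ) : Prop :=
  Composite n ∧ ∀ p : ℕ, p.Prime → p ∣ n → p ∣ (n / p - 1)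

/-- Sum of `j^e` over `ZMod p` for `p` prime. -/
lemma aux_sum_pow_prime (p : ℕ) [hp : Fact p.Prime] (e : ℕ) (he : 0 < e) :
    ∑ j ∈ range p, (j : ZMod p) ^ e = if (p - 1) ∣ e then -1 else 0 := by
  classical
  have h1 : ∑ j ∈ range p, (j : ZMod p) ^ e = ∑ x : ZMod p, x ^ e := by
    refine Finset.sum_nbij' (fun j => (j : ZMod p)) (fun x => x.val) ?_ ?_ ?_ ?_ ?_ <;>
      intro a ha
    · exact mem_univ _
    · exact mem_range.mpr (ZMod.val_lt a)
    · exact ZMod.val_cast_of_lt (mem_range.mp ha)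
    · exact ZMod.natCast_rightInverse a
    · rfl
  have h2 : ∑ x : ZMod p, x ^ e = ∑ x : (ZMod p)ˣ, (x : ZMod p) ^ e := by
    let φ : (ZMod p)ˣ ↪ ZMod p := ⟨fun x => x, fun _ _ h => Units.ext h⟩
    have huniv : (univ : Finset (ZMod p)ˣ).map φ = univ \ {0} := by
      ext x
      simp only [mem_map, mem_univ, Function.Embedding.coeFn_mk, true_and, mem_sdiff,
        mem_singleton, φ]
      exact isUnit_iff_ne_zero
    calc ∑ x : ZMod p, x ^ e = ∑ x ∈ univ \ {(0 : ZMod p)}, x ^ e := by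
          rw [← sum_sdiff ({0} : Finset (ZMod p)).subset_univ, sum_singleton,
            zero_pow he.ne', add_zero]
      _ = ∑ x : (ZMod p)ˣ, (x : ZMod p) ^ e := by
          rw [← huniv, Finset.sum_map]; rfl
  rw [h1, h2]
  have := FiniteField.sum_pow_units (ZMod p) e
  simp only [ZMod.card] at this
  exact this

/-- Grouping sum over `range (m * p)` into `m` blocks. -/
lemma aux_sum_range_mul (p e m : ℕ) :
    ∑ j ∈ range (m * p), ((j : ZMod p)) ^ e
      = (m : ZMod p) * ∑ j ∈ range p, (j : ZMod p) ^ e := by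
  induction m with
  | zero => simp
  | succ m ih =>
    rw [Nat.succ_mul, Finset.sum_range_add, ih]
    have hcast : ∀ r : ℕ, ((m * p + r : ℕ) : ZMod p) = (r : ZMod p) := by
      intro r
      push_cast [ZMod.natCast_self]
      ring
    have : ∑ i ∈ range p, ((m * p + i : ℕ) : ZMod p) ^ e
        = ∑ i ∈ range p, (i : ZMod p) ^ e := by
      refine Finset.sum_congr rfl fun i _ => ?_
      rw [hcast]
    rw [this]
    push_cast
    ring

/-- The key congruence modulo a prime divisor. -/
lemma aux_key_mod (n p e : ℕ) [hp : Fact p.Prime] (hpn : p ∣ n) (he : 0 < e) :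
    ((∑ j ∈ range n, j ^ e : ℕ) : ZMod p)
      = ((n / p : ℕ) : ZMod p) * (if (p - 1) ∣ e then -1 else 0) := by
  have h := aux_sum_range_mul p e (n / p)
  rw [Nat.div_mul_cancel hpn] at h
  rw [← aux_sum_pow_prime p e he, ← h]
  push_cast
  rfl

theorem kStrongGiuga_iff (n k : ℕ) (hn : Composite n) (hk : 0 < k) :
    (∑ j ∈ Finset.Ico 1 n, (j : ZMod n) ^ (k * (n - 1)) = -1) ↔
      IsGiuga n ∧ carmichael n ∣ k * (n - 1) := by
  obtain ⟨hn2, hnp⟩ := hn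
  have hn0 : 0 < n := by omega
  haveI : NeZero n := ⟨by omega⟩
  set e := k * (n - 1) with he_def
  have he : 0 < e := Nat.mul_pos hk (by omega)
  set S : ℕ := ∑ j ∈ range n, j ^ e with hS_def
  -- rewrite the LHS as a divisibility statement
  have hiff : (∑ j ∈ Finset.Ico 1 n, (j : ZMod n) ^ e = -1) ↔ n ∣ S + 1 := by
    have hrange : ∑ j ∈ Finset.Ico 1 n, (j : ZMod n) ^ e
        = ((S : ℕ) : ZMod n) := by
      rw [hS_def]
      push_cast
      rw [Finset.range_eq_Ico, Finset.sum_eq_sum_Ico_succ_bot hn0]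
      simp [zero_pow he.ne']
    rw [hrange]
    constructor
    · intro h
      have : ((S + 1 : ℕ) : ZMod n) = 0 := by push_cast [h]; ring
      exact (ZMod.natCast_eq_zero_iff _ _).mp this
    · intro h
      have : ((S + 1 : ℕ) : ZMod n) = 0 := (ZMod.natCast_eq_zero_iff _ _).mpr h
      push_cast at this
      linear_combination this
  rw [hiff]
  constructor
  · -- forward direction
    intro hd
    -- for each prime p ∣ n : (S : ZMod p) = -1
    have hSp : ∀ p : ℕ, p.Prime → p ∣ n → ((S : ℕ) : ZMod p) = -1 := by
      intro p pp hpn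
      haveI : Fact p.Prime := ⟨pp⟩
      have : ((S + 1 : ℕ) : ZMod p) = 0 :=
        (ZMod.natCast_eq_zero_iff _ _).mpr (hpn.trans hd)
      push_cast at this
      linear_combination this
    have hne : ∀ p : ℕ, p.Prime → ((-1 : ZMod p) ≠ 0) := by
      intro p pp
      haveI : Fact p.Prime := ⟨pp⟩
      simp
    -- each prime divisor satisfies (p-1) ∣ e and ¬ p*p ∣ n and p ∣ n/p - 1
    have hmain : ∀ p : ℕ, p.Prime → p ∣ n →
        (p - 1) ∣ e ∧ ¬ p * p ∣ n ∧ p ∣ (n / p - 1) := by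
      intro p pp hpn
      haveI : Fact p.Prime := ⟨pp⟩
      have hkey := aux_key_mod n p e hpn he
      rw [hSp p pp hpn] at hkey
      by_cases hdvd : (p - 1) ∣ e
      · rw [if_pos hdvd] at hkey
        have hnp1 : ((n / p : ℕ) : ZMod p) = 1 := by linear_combination hkey
        have hsq : ¬ p * p ∣ n := by
          intro hsq
          have : p ∣ n / p := (Nat.dvd_div_iff_mul_dvd hpn).mpr hsq
          have h0 : ((n / p : ℕ) : ZMod p) = 0 :=
            (ZMod.natCast_eq_zero_iff _ _).mpr this
          rw [h0] at hnp1
          exact one_ne_zero hnp1.symm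
        have hmod : n / p ≡ 1 [MOD p] := (ZMod.natCast_eq_natCast_iff _ _ _).mp
          (by rw [hnp1]; simp)
        have h1le : 1 ≤ n / p := Nat.one_le_div_iff pp.pos |>.mpr (Nat.le_of_dvd hn0 hpn)
        exact ⟨hdvd, hsq, (Nat.modEq_iff_dvd' h1le).mp hmod.symm⟩
      · rw [if_neg hdvd, mul_zero] at hkey
        exact absurd hkey (hne p pp)
    have hsqf : Squarefree n := by
      rw [Nat.squarefree_iff_prime_squarefree]
      intro p pp hpp
      exact (hmain p pp (dvd_trans (dvd_mul_left p p) hpp)).2.1 hpp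
    refine ⟨⟨⟨hn2, hnp⟩, fun p pp hpn => (hmain p pp hpn).2.2⟩, ?_⟩
    -- carmichael n ∣ e
    rw [carmichael]
    apply Monoid.exponent_dvd_of_forall_pow_eq_one
    intro u
    -- reduce to a natural number congruence
    set a : ℕ := (u : ZMod n).val with ha_def
    have hau : ((a : ℕ) : ZMod n) = (u : ZMod n) := ZMod.natCast_rightInverse _
    have hcop : Nat.Coprime a n := ZMod.val_coe_unit_coprime u
    have ha1 : 1 ≤ a ^ e := by
      rcases Nat.eq_zero_or_pos a with h0 | h1
      · exfalso
        rw [h0] at hcop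
        simp [Nat.coprime_zero_left] at hcop
        omega
      · exact Nat.one_le_pow _ _ h1
    have hdvd : n ∣ a ^ e - 1 := by
      have : ∀ p ∈ n.primeFactors, p ∣ a ^ e - 1 := by
        intro p hp
        rw [Nat.mem_primeFactors] at hp
        obtain ⟨pp, hpn, -⟩ := hp
        haveI : Fact p.Prime := ⟨pp⟩
        obtain ⟨c, hc⟩ := (hmain p pp hpn).1
        have hpa : ¬ p ∣ a :=
          (Nat.Prime.coprime_iff_not_dvd pp).mp ((hcop.coprime_dvd_right hpn).symm)
        have hfermat : a ^ e ≡ 1 [MOD p] := by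
          have := Nat.ModEq.pow_totient (hcop.coprime_dvd_right hpn)
          rw [Nat.totient_prime pp] at this
          calc a ^ e = (a ^ (p - 1)) ^ c := by rw [← pow_mul, hc]
            _ ≡ 1 ^ c [MOD p] := this.pow c
            _ = 1 := one_pow c
        exact (Nat.modEq_iff_dvd' ha1).mp hfermat.symm
      calc n = ∏ p ∈ n.primeFactors, p := (Nat.prod_primeFactors_of_squarefree hsqf).symm
        _ ∣ a ^ e - 1 := Finset.prod_primes_dvd _
            (fun p hp => (Nat.prime_of_mem_primeFactors hp).prime) this
    -- conclude u ^ e = 1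
    have : ((a ^ e : ℕ) : ZMod n) = 1 := by
      have := (Nat.modEq_iff_dvd' ha1).mpr hdvd
      have := (ZMod.natCast_eq_natCast_iff _ _ _).mpr this.symm
      simpa using this
    ext
    push_cast at this ⊢
    rw [hau] at this
    simpa using this
  · -- backward direction
    rintro ⟨⟨-, hgiuga⟩, hcar⟩
    have hsqf : Squarefree n := by
      rw [Nat.squarefree_iff_prime_squarefree]
      intro p pp hpp
      have hpn : p ∣ n := dvd_trans (dvd_mul_left p p) hpp
      have h1 : p ∣ n / p := (Nat.dvd_div_iff_mul_dvd hpn).mpr hpp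
      have h2 := hgiuga p pp hpn
      have h3 : p ∣ 1 := by
        have := Nat.dvd_sub h1 h2
        have h1le : 1 ≤ n / p := Nat.one_le_div_iff pp.pos |>.mpr (Nat.le_of_dvd hn0 hpn)
        rwa [Nat.sub_sub_self h1le] at this
      exact pp.one_lt.ne' (Nat.dvd_one.mp h3)
    have hdvd : ∀ p ∈ n.primeFactors, p ∣ S + 1 := by
      intro p hp
      rw [Nat.mem_primeFactors] at hp
      obtain ⟨pp, hpn, -⟩ := hp
      haveI : Fact p.Prime := ⟨pp⟩
      -- (p - 1) ∣ e
      have hexp : (p - 1) ∣ e := by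
        refine dvd_trans ?_ hcar
        have hsurj := ZMod.unitsMap_surjective (n := p) (m := n) hpn
        have := MonoidHom.exponent_dvd hsurj
        rw [carmichael]
        rwa [IsCyclic.exponent_eq_card, Nat.card_eq_fintype_card, ZMod.card_units] at this
      have hkey := aux_key_mod n p e hpn he
      rw [if_pos hexp] at hkey
      have h1le : 1 ≤ n / p := Nat.one_le_div_iff pp.pos |>.mpr (Nat.le_of_dvd hn0 hpn)
      have hnp1 : ((n / p : ℕ) : ZMod p) = 1 := by
        have := (Nat.modEq_iff_dvd' h1le).mpr (hgiuga p pp hpn)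
        have := (ZMod.natCast_eq_natCast_iff _ _ _).mpr this
        simpa using this.symm
      rw [hnp1] at hkey
      have : ((S + 1 : ℕ) : ZMod p) = 0 := by rw [Nat.cast_add, Nat.cast_one, hS_def, hkey]; ring
      exact (ZMod.natCast_eq_zero_iff _ _).mp this
    calc n = ∏ p ∈ n.primeFactors, p := (Nat.prod_primeFactors_of_squarefree hsqf).symm
      _ ∣ S + 1 := Finset.prod_primes_dvd _
          (fun p hp => (Nat.prime_of_mem_primeFactors hp).prime) hdvd
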